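/- Let X be a fan with vertex v. If K ⊆ X is a nonempty compact connected subset with v ∉ K, then K is either an arc or a singleton. -/

import Mathlib

open Set Filter Topology Metric

noncomputable section

/-- An arc in a topological space: a subset homeomorphic to the closed unit
interval `[0,1]`. -/
def IsArc {X : Type*} [TopologicalSpace X] (A : Set X) : Prop :=
  Nonempty (Set.Icc (0 : ℝ) 1 ≃ₜ A)

/-- `x` is an endpoint of the arc `A`: it is the image of `0` or `1` under some
homeomorphism from `[0,1]` onto `A`. -/
def IsArcEndpoint {X : Type*} [TopologicalSpace X] (A : Set X) (x : X) : Prop :=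
  ∃ e : Set.Icc (0 : ℝ) 1 ≃ₜ A,
    (e ⟨0, by norm_num⟩ : X) = x ∨ (e ⟨1, by norm_num⟩ : X) = x

/-- A point `x` on the frontier of an open set `U` is a piercing point of `U` if
for every open `V ∋ x` and every arc `α` in the space containing `x` with `x` not
an endpoint of `α`, the set `α ∩ V` meets both `U` and the complement of the
closure of `U`. -/
def IsPiercingPoint {X : Type*} [TopologicalSpace X] (U : Set X) (x : X) : Prop :=
  x ∈ frontier U ∧
    ∀ V : Set X, IsOpen V → x ∈ V →
      ∀ α : Set X, IsArc α → x ∈ α → ¬ IsArcEndpoint α x →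
        (α ∩ V ∩ U).Nonempty ∧ (α ∩ V ∩ (closure U)ᶜ).Nonempty

/-- An open set is pierced if every point of its frontier is a piercing point. -/
def IsPierced {X : Type*} [TopologicalSpace X] (U : Set X) : Prop :=
  IsOpen U ∧ ∀ x ∈ frontier U, IsPiercingPoint U x

/-- A space has the Jure property if its topology has a basis of pierced open sets. -/
def HasJureProperty (X : Type*) [TopologicalSpace X] : Prop :=
  ∃ B : Set (Set X), TopologicalSpace.IsTopologicalBasis B ∧ ∀ U ∈ B, IsPierced U

/-- A fence: a compact metric space each of whose connected components is an arc
or a single point. -/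
def IsFenceSpace (X : Type*) [MetricSpace X] : Prop :=
  CompactSpace X ∧
    ∀ x : X, IsArc (connectedComponent x) ∨ connectedComponent x = {x}

/-- `X` is a fan with vertex `v`: a continuum which is the union of a collection
of arcs any two of which meet exactly at `v`, and in which the intersection of
any two subcontinua is connected. -/
def IsFanWithVertex (X : Type*) [MetricSpace X] (v : X) : Prop :=
  Nonempty X ∧ CompactSpace X ∧ ConnectedSpace X ∧
    (∃ 𝓛 : Set (Set X), (∀ L ∈ 𝓛, IsArc L) ∧ ⋃₀ 𝓛 = Set.univ ∧
      ∀ L ∈ 𝓛, ∀ L' ∈ 𝓛, L ≠ L' → L ∩ L' = {v}) ∧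
    ∀ H K : Set X, H.Nonempty → IsCompact H → IsPreconnected H →
      K.Nonempty → IsCompact K → IsPreconnected K → IsPreconnected (H ∩ K)

/-- The Euclidean plane. -/
abbrev Plane : Type := EuclideanSpace ℝ (Fin 2)

/-- The closed annulus `A_{rq}(p)` between the circles of radii `r` and `q`
centered at `p`. -/
def closedAnnulus (p : Plane) (r q : ℝ) : Set Plane :=
  {x | min r q ≤ dist x p ∧ dist x p ≤ max r q}

/-- A fence inside the plane: a compact set each of whose connected components
is an arc or a single point. -/
def IsFenceSet (X : Set Plane) : Prop :=
  IsCompact X ∧ ∀ x ∈ X,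
    IsArc (connectedComponentIn X x) ∨ connectedComponentIn X x = {x}

/-- `β` is a bend at `S_r(p)` terminating at `S_q(p)`: an arc `β ⊆ X` contained
in the closed annulus `A_{rq}(p)`, meeting `S_r(p)`, and meeting `S_q(p)`
exactly in its two endpoints. -/
def IsBendTerminating (X : Set Plane) (p : Plane) (r q : ℝ) (β : Set Plane) : Prop :=
  IsArc β ∧ β ⊆ X ∧ β ⊆ closedAnnulus p r q ∧
    (β ∩ Metric.sphere p r).Nonempty ∧
    β ∩ Metric.sphere p q = {x | IsArcEndpoint β x}

/-- `β` is a bend at `S_r(p)`: a bend terminating at `S_q(p)` for some `q > 0`. -/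
def IsBendAt (X : Set Plane) (p : Plane) (r : ℝ) (β : Set Plane) : Prop :=
  ∃ q > 0, IsBendTerminating X p r q β

/-- The bend `β` (terminating at `S_q(p)`) separates `ϑ` from `∞`: there is an
arc `α ⊆ D_q(p)` meeting `S_q(p)` exactly at the endpoints of `β` such that `ϑ`
lies in a bounded connected component of the complement of `α ∪ β`. -/
def SeparatesFromInfinity (p : Plane) (q : ℝ) (β : Set Plane) (ϑ : Plane) : Prop :=
  ∃ α : Set Plane, IsArc α ∧ α ⊆ Metric.closedBall p q ∧
    α ∩ Metric.sphere p q = {x | IsArcEndpoint β x} ∧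
    ϑ ∉ α ∪ β ∧ Bornology.IsBounded (connectedComponentIn ((α ∪ β)ᶜ) ϑ)

/-- `𝔅_{qrϑ}`: the set of all bends at `S_r(p)` terminating at `S_q(p)` that
separate `ϑ` from `∞`. -/
def Bends (X : Set Plane) (p : Plane) (q r : ℝ) (ϑ : Plane) : Set (Set Plane) :=
  {β | IsBendTerminating X p r q β ∧ SeparatesFromInfinity p q β ϑ}

/-- Topological limit superior of a sequence of sets:
`⋂_N closure (⋃_{n ≥ N} A n)`. -/
def setLimsup {X : Type*} [TopologicalSpace X] (A : ℕ → Set X) : Set X :=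
  ⋂ N : ℕ, closure (⋃ n, ⋃ _ : N ≤ n, A n)

/-- The point `p + q • (cos θ, sin θ)` of the circle `S_q(p)`. -/
def circlePoint (p : Plane) (q θ : ℝ) : Plane :=
  p + (q * Real.cos θ) • EuclideanSpace.single (0 : Fin 2) (1 : ℝ)
    + (q * Real.sin θ) • EuclideanSpace.single (1 : Fin 2) (1 : ℝ)


section FanAux

variable {Y : Type*} [TopologicalSpace Y]

private lemma arcParam_range {A : Set Y} (e : Set.Icc (0:ℝ) 1 ≃ₜ A) :
    Set.range (fun t : Set.Icc (0:ℝ) 1 => ((e t : A) : Y)) = A := by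
  have : (fun t : Set.Icc (0:ℝ) 1 => ((e t : A) : Y)) = Subtype.val ∘ e := rfl
  rw [this, Set.range_comp, e.surjective.range_eq, Set.image_univ, Subtype.range_coe]

private lemma IsArc.nonempty' {A : Set Y} (h : IsArc A) : A.Nonempty := by
  obtain ⟨e⟩ := h
  exact ⟨e ⟨0, by norm_num⟩, (e ⟨0, by norm_num⟩).2⟩

private lemma IsArc.isCompact' {A : Set Y} (h : IsArc A) : IsCompact A := by
  obtain ⟨e⟩ := h
  haveI : CompactSpace (Set.Icc (0:ℝ) 1) := isCompact_iff_compactSpace.1 isCompact_Icc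
  rw [← arcParam_range e]
  exact isCompact_range (continuous_subtype_val.comp e.continuous)

private lemma IsArc.isPreconnected' {A : Set Y} (h : IsArc A) : IsPreconnected A := by
  obtain ⟨e⟩ := h
  haveI : PreconnectedSpace (Set.Icc (0:ℝ) 1) := Subtype.preconnectedSpace isPreconnected_Icc
  rw [← arcParam_range e]
  exact isPreconnected_range (continuous_subtype_val.comp e.continuous)

/-- A nonempty subcontinuum of an arc is an arc or a singleton. -/
private lemma subcontinuum_of_arc {Y : Type*} [TopologicalSpace Y] [T2Space Y] {L K : Set Y}
    (hL : IsArc L) (hKL : K ⊆ L) (hKne : K.Nonempty) (hKc : IsCompact K)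
    (hKconn : IsPreconnected K) : IsArc K ∨ ∃ x : Y, K = {x} := by
  obtain ⟨e⟩ := hL
  haveI : CompactSpace (Set.Icc (0:ℝ) 1) := isCompact_iff_compactSpace.1 isCompact_Icc
  set φ : Set.Icc (0:ℝ) 1 → Y := fun t => ((e t : L) : Y) with hφ
  have hφc : Continuous φ := continuous_subtype_val.comp e.continuous
  have hφinj : Function.Injective φ := Subtype.val_injective.comp e.injective
  have hφrange : Set.range φ = L := arcParam_range e
  have hφind : Topology.IsInducing φ := Topology.IsInducing.subtypeVal.comp e.isInducing
  set P : Set (Set.Icc (0:ℝ) 1) := φ ⁻¹' K with hP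
  have hPK : φ '' P = K := Set.image_preimage_eq_of_subset (by rw [hφrange]; exact hKL)
  have hPpre : IsPreconnected P := hφind.isPreconnected_image.1 (hPK ▸ hKconn)
  have hPcl : IsClosed P := hKc.isClosed.preimage hφc
  have hPc : IsCompact P := hPcl.isCompact
  have hPne : P.Nonempty := by
    obtain ⟨k, hk⟩ := hKne
    rw [← hPK] at hk
    obtain ⟨p, hp, -⟩ := hk
    exact ⟨p, hp⟩
  set T : Set ℝ := Subtype.val '' P with hT
  have hTc : IsCompact T := hPc.image continuous_subtype_val
  have hTconn : IsConnected T :=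
    ⟨hPne.image _, hPpre.image _ continuous_subtype_val.continuousOn⟩
  have hTicc : T = Set.Icc (sInf T) (sSup T) := eq_Icc_of_connected_compact hTconn hTc
  set c := sInf T with hc
  set d := sSup T with hd
  have hTsub : T ⊆ Set.Icc (0:ℝ) 1 := by rintro _ ⟨p, _, rfl⟩; exact p.2
  have hmemP : ∀ t : ℝ, t ∈ T → ∀ ht : t ∈ Set.Icc (0:ℝ) 1, (⟨t, ht⟩ : Set.Icc (0:ℝ) 1) ∈ P := by
    rintro _ ⟨p, hp, rfl⟩ ht
    have hpe : (⟨(p:ℝ), ht⟩ : Set.Icc (0:ℝ) 1) = p := Subtype.ext rfl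
    rw [hpe]; exact hp
  rcases lt_or_ge c d with hcd | hdc
  · -- arc case
    left
    haveI : CompactSpace ↥T := isCompact_iff_compactSpace.1 hTc
    set m : ↥T → ↥K := fun t =>
      ⟨φ ⟨t.1, hTsub t.2⟩, by
        rw [← hPK]; exact ⟨_, hmemP t.1 t.2 (hTsub t.2), rfl⟩⟩ with hm
    have hmcont : Continuous m := by
      apply Continuous.subtype_mk
      exact hφc.comp (continuous_subtype_val.subtype_mk _)
    have hmbij : Function.Bijective m := by
      constructor
      · intro s t hst
        have h0 : ((m s : ↥K) : Y) = ((m t : ↥K) : Y) := Subtype.ext_iff.mp hst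
        have h1 : φ ⟨s.1, hTsub s.2⟩ = φ ⟨t.1, hTsub t.2⟩ := h0
        have h2 : ((⟨s.1, hTsub s.2⟩ : Set.Icc (0:ℝ) 1) : ℝ)
            = (⟨t.1, hTsub t.2⟩ : Set.Icc (0:ℝ) 1) := Subtype.ext_iff.mp (hφinj h1)
        exact Subtype.ext h2
      · rintro ⟨k, hk⟩
        rw [← hPK] at hk
        obtain ⟨p, hp, rfl⟩ := hk
        refine ⟨⟨(p : ℝ), ⟨p, hp, rfl⟩⟩, ?_⟩
        exact Subtype.ext (congrArg φ (Subtype.ext rfl))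
    have hhomeo : ↥T ≃ₜ ↥K :=
      Continuous.homeoOfEquivCompactToT2 (f := Equiv.ofBijective m hmbij) hmcont
    exact ⟨((iccHomeoI c d hcd).symm.trans (Homeomorph.setCongr hTicc.symm)).trans hhomeo⟩
  · -- singleton case
    right
    obtain ⟨k, hk⟩ := hKne
    refine ⟨k, Set.eq_singleton_iff_unique_mem.2 ⟨hk, fun y hy => ?_⟩⟩
    rw [← hPK] at hy hk
    obtain ⟨p, hp, rfl⟩ := hy
    obtain ⟨q, hq, rfl⟩ := hk
    have h1 : (p:ℝ) ∈ Set.Icc c d := hTicc ▸ ⟨p, hp, rfl⟩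
    have h2 : (q:ℝ) ∈ Set.Icc c d := hTicc ▸ ⟨q, hq, rfl⟩
    have hpq : (p:ℝ) = (q:ℝ) := by
      have := h1.1; have := h1.2; have := h2.1; have := h2.2; linarith
    exact congrArg φ (Subtype.ext hpq)

end FanAux

/-- In a fan with vertex `v`, every subcontinuum missing `v` is
an arc or a singleton. -/
theorem subcontinuum_missing_vertex_is_arc_or_point (X : Type*) [MetricSpace X]
    (v : X) (hX : IsFanWithVertex X v) (K : Set X) (hKne : K.Nonempty)
    (hKc : IsCompact K) (hKconn : IsPreconnected K) (hvK : v ∉ K) :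
    IsArc K ∨ ∃ x : X, K = {x} := by
  obtain ⟨-, -, -, ⟨𝓛, h𝓛arc, h𝓛cover, h𝓛inter⟩, hfan⟩ := hX
  obtain ⟨x, hxK⟩ := hKne
  have hxU : x ∈ ⋃₀ 𝓛 := h𝓛cover ▸ Set.mem_univ x
  obtain ⟨L, hL𝓛, hxL⟩ := hxU
  have hLarc := h𝓛arc L hL𝓛
  have hKL : K ⊆ L := by
    intro y hyK
    by_contra hyL
    have hyU : y ∈ ⋃₀ 𝓛 := h𝓛cover ▸ Set.mem_univ y
    obtain ⟨L', hL'𝓛, hyL'⟩ := hyU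
    have hLL' : L ≠ L' := fun h => hyL (h ▸ hyL')
    have hinter : L ∩ L' = {v} := h𝓛inter L hL𝓛 L' hL'𝓛 hLL'
    have hvLL' : v ∈ L ∩ L' := hinter ▸ rfl
    have hvL' : v ∈ L' := hvLL'.2
    have hL'arc := h𝓛arc L' hL'𝓛
    set C : Set X := (L ∪ K) ∩ L' with hCdef
    have hCpre : IsPreconnected C :=
      hfan (L ∪ K) L' ⟨x, Or.inl hxL⟩ (hLarc.isCompact'.union hKc)
        (hLarc.isPreconnected'.union x hxL hxK hKconn) hL'arc.nonempty'
        hL'arc.isCompact' hL'arc.isPreconnected'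
    have hC : C = {v} ∪ (K ∩ L') := by
      rw [hCdef, Set.union_inter_distrib_right, hinter]
    have hCL' : C ⊆ L' := Set.inter_subset_right
    obtain ⟨e⟩ := hL'arc
    set φ : Set.Icc (0:ℝ) 1 → X := fun t => ((e t : L') : X) with hφ
    have hφc : Continuous φ := continuous_subtype_val.comp e.continuous
    have hφinj : Function.Injective φ := Subtype.val_injective.comp e.injective
    have hφrange : Set.range φ = L' := arcParam_range e
    have hφind : Topology.IsInducing φ := Topology.IsInducing.subtypeVal.comp e.isInducing
    set a : Set.Icc (0:ℝ) 1 := e.symm ⟨v, hvL'⟩ with ha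
    set b : Set.Icc (0:ℝ) 1 := e.symm ⟨y, hyL'⟩ with hb
    have hφa : φ a = v := by
      show ((e (e.symm ⟨v, hvL'⟩) : L') : X) = v
      rw [e.apply_symm_apply]
    have hφb : φ b = y := by
      show ((e (e.symm ⟨y, hyL'⟩) : L') : X) = y
      rw [e.apply_symm_apply]
    set S : Set ℝ := Subtype.val '' (φ ⁻¹' C) with hS
    have himg : φ '' (φ ⁻¹' C) = C :=
      Set.image_preimage_eq_of_subset (by rw [hφrange]; exact hCL')
    have hpre : IsPreconnected (φ ⁻¹' C) := hφind.isPreconnected_image.1 (by rw [himg]; exact hCpre)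
    have hSpre : IsPreconnected S := hpre.image _ continuous_subtype_val.continuousOn
    have hSord : Set.OrdConnected S := hSpre.ordConnected
    have hvC : v ∈ C := ⟨Or.inl hvLL'.1, hvL'⟩
    have hyC : y ∈ C := ⟨Or.inr hyK, hyL'⟩
    have haS : (a:ℝ) ∈ S := ⟨a, by rw [Set.mem_preimage, hφa]; exact hvC, rfl⟩
    have hbS : (b:ℝ) ∈ S := ⟨b, by rw [Set.mem_preimage, hφb]; exact hyC, rfl⟩
    have hab : (a:ℝ) ≠ (b:ℝ) := by
      intro h
      have hab' : a = b := Subtype.ext h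
      have hvy : v = y := by rw [← hφa, ← hφb, hab']
      exact hvK (hvy ▸ hyK)
    have hvcl : v ∈ closure K := by
      rw [Metric.mem_closure_iff]
      intro ε hε
      have hcont : ContinuousAt φ a := hφc.continuousAt
      rw [Metric.continuousAt_iff] at hcont
      obtain ⟨δ, hδ, hδ'⟩ := hcont ε hε
      obtain ⟨n, hn⟩ := exists_nat_gt (|(b:ℝ) - (a:ℝ)| / δ)
      have hn1 : (1:ℝ) ≤ (n:ℝ) + 1 := by
        have : (0:ℝ) ≤ (n:ℝ) := Nat.cast_nonneg n; linarith
      have hn0 : (0:ℝ) < (n:ℝ) + 1 := by linarith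
      set u : ℝ := (a:ℝ) + ((b:ℝ) - (a:ℝ)) / ((n:ℝ) + 1) with hu
      have hune : u ≠ (a:ℝ) := by
        intro h
        have h1 : ((b:ℝ) - (a:ℝ)) / ((n:ℝ) + 1) = 0 := by rw [hu] at h; linarith
        have h2 : (b:ℝ) - (a:ℝ) = 0 := by
          field_simp at h1
          linarith
        exact hab (by linarith)
      have huI : u ∈ Set.uIcc (a:ℝ) (b:ℝ) := by
        rcases lt_or_gt_of_ne hab with hlt | hgt
        · apply Set.mem_uIcc.2
          left
          constructor
          · have : (0:ℝ) ≤ ((b:ℝ) - (a:ℝ)) / ((n:ℝ) + 1) :=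
              div_nonneg (by linarith) (by linarith)
            rw [hu]; linarith
          · have : ((b:ℝ) - (a:ℝ)) / ((n:ℝ) + 1) ≤ (b:ℝ) - (a:ℝ) :=
              div_le_self (by linarith) hn1
            rw [hu]; linarith
        · apply Set.mem_uIcc.2
          right
          constructor
          · have h1 : (-((b:ℝ) - (a:ℝ))) / ((n:ℝ) + 1) ≤ -((b:ℝ) - (a:ℝ)) :=
              div_le_self (by linarith) hn1
            have h2 : (-((b:ℝ) - (a:ℝ))) / ((n:ℝ) + 1)
                = -(((b:ℝ) - (a:ℝ)) / ((n:ℝ) + 1)) := neg_div _ _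
            rw [hu]; rw [h2] at h1; linarith
          · have : ((b:ℝ) - (a:ℝ)) / ((n:ℝ) + 1) ≤ 0 := by
              apply div_nonpos_of_nonpos_of_nonneg <;> linarith
            rw [hu]; linarith
      obtain ⟨p, hpC, hpu⟩ := hSord.uIcc_subset haS hbS huI
      have hdistpa : dist p a < δ := by
        rw [Subtype.dist_eq, hpu, Real.dist_eq, hu]
        have h1 : |(b:ℝ) - (a:ℝ)| < (n:ℝ) * δ := (div_lt_iff₀ hδ).1 hn
        have h2 : |(a:ℝ) + ((b:ℝ) - (a:ℝ)) / ((n:ℝ) + 1) - (a:ℝ)|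
            = |(b:ℝ) - (a:ℝ)| / ((n:ℝ) + 1) := by
          rw [add_sub_cancel_left, abs_div, abs_of_pos hn0]
        rw [h2, div_lt_iff₀ hn0]
        nlinarith
      have hdist : dist (φ p) (φ a) < ε := hδ' hdistpa
      have hφpK : φ p ∈ K := by
        have hpC' : φ p ∈ C := hpC
        rw [hC] at hpC'
        rcases hpC' with h | h
        · exfalso
          have : p = a := hφinj (by rw [hφa]; exact h)
          exact hune (by rw [← hpu, this])
        · exact h.1
      exact ⟨φ p, hφpK, by rw [dist_comm, ← hφa]; exact hdist⟩
    exact hvK (hKc.isClosed.closure_eq ▸ hvcl)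
  exact subcontinuum_of_arc hLarc hKL ⟨x, hxK⟩ hKc hKconn
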